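/- Let G be a group and F a family of subgroups of G. Then G is amenable relative to F (i.e. the G-set G/F admits a G-invariant mean) if and only if the trivial normed ℝG-module ℝ (with trivial G-action and the absolute value norm) is relatively F-injective. -/

import Mathlib

open scoped BigOperators

universe u v w

namespace RelBdd

variable {G : Type u} [Group G]

/-- `F` is a family of subgroups of `G`: nonempty, closed under conjugation and
closed under taking subgroups. -/
def IsFamily (F : Set (Subgroup G)) : Prop :=
  F.Nonempty ∧
    (∀ H ∈ F, ∀ g : G, Subgroup.map ((MulAut.conj g).toMonoidHom) H ∈ F) ∧
    ∀ H ∈ F, ∀ K : Subgroup G, K ≤ H → K ∈ F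

/-- The `G`-set `G/F = ⨿_{H ∈ F} G/H`. -/
abbrev Cos (G : Type u) [Group G] (F : Set (Subgroup G)) : Type u :=
  Σ H : F, G ⧸ (H : Subgroup G)

instance (F : Set (Subgroup G)) : SMul G (Cos G F) :=
  ⟨fun g x => ⟨x.1, g • x.2⟩⟩

instance (F : Set (Subgroup G)) : MulAction G (Cos G F) where
  one_smul := by
    rintro ⟨H, q⟩
    show (⟨H, (1 : G) • q⟩ : Cos G F) = ⟨H, q⟩
    rw [one_smul]
  mul_smul g h := by
    rintro ⟨H, q⟩
    show (⟨H, (g * h) • q⟩ : Cos G F) = ⟨H, g • h • q⟩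
    rw [mul_smul]

/-- A function into a normed space is bounded. -/
def Bdd {α : Type*} {V : Type*} [Norm V] (f : α → V) : Prop :=
  ∃ C : ℝ, ∀ x, ‖f x‖ ≤ C

/-- The simplicial coboundary operator on `V`-valued cochains on a set `S`. -/
def delta {S : Type*} {V : Type*} [AddCommGroup V] [Module ℝ V] (n : ℕ)
    (f : (Fin (n + 1) → S) → V) : (Fin (n + 2) → S) → V :=
  fun x => ∑ i : Fin (n + 2), ((-1 : ℝ) ^ (i : ℕ)) • f (fun j => x (i.succAbove j))

/-- `ℓ∞(S)`: the space of bounded real valued functions on `S`. -/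
def Linf (S : Type v) : Submodule ℝ (S → ℝ) where
  carrier := {f | ∃ C : ℝ, ∀ s, |f s| ≤ C}
  add_mem' := by
    rintro f g ⟨C, hC⟩ ⟨D, hD⟩
    exact ⟨C + D, fun s => (abs_add_le _ _).trans (add_le_add (hC s) (hD s))⟩
  zero_mem' := ⟨0, fun s => by simp⟩
  smul_mem' := by
    rintro r f ⟨C, hC⟩
    refine ⟨|r| * C, fun s => ?_⟩
    show |r * f s| ≤ |r| * C
    rw [abs_mul]
    exact mul_le_mul_of_nonneg_left (hC s) (abs_nonneg r)

/-- The constant function `r` as an element of `ℓ∞(S)`. -/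
def constLinf (S : Type v) (r : ℝ) : Linf S :=
  ⟨fun _ => r, ⟨|r|, fun _ => le_rfl⟩⟩

/-- Precomposition with a map `φ : S → S` as a linear endomorphism of `ℓ∞(S)`. -/
def compL {S : Type v} (φ : S → S) : Linf S →ₗ[ℝ] Linf S where
  toFun f := ⟨fun s => (f : S → ℝ) (φ s), by
    obtain ⟨C, hC⟩ := f.2
    exact ⟨C, fun s => hC (φ s)⟩⟩
  map_add' f g := by ext s; rfl
  map_smul' r f := by ext s; rfl

/-- There exists a `K`-invariant mean on the `K`-set `S`. -/
def InvariantMean (K : Type u) (S : Type v) [Group K] [MulAction K S] : Prop :=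
  ∃ m : Linf S →ₗ[ℝ] ℝ,
    m (constLinf S 1) = 1 ∧
    (∀ f : Linf S, (∀ s, 0 ≤ (f : S → ℝ) s) → 0 ≤ m f) ∧
    ∀ (g : K) (f : Linf S), m (compL (fun s => g⁻¹ • s) f) = m f

/-- The restriction `F|_H = {L ∩ H : L ∈ F}` of a collection of subgroups of `G` to
a collection of subgroups of `H`. -/
def restrictedFamily (F : Set (Subgroup G)) (H : Subgroup G) : Set (Subgroup H) :=
  {K | ∃ L ∈ F, K = L.subgroupOf H}

/-- `K` is amenable relative to the collection `𝒦` of its subgroups: the `K`-set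
`⨿_{L ∈ 𝒦} K/L` admits a `K`-invariant mean. -/
def RelativelyAmenable (K : Type u) [Group K] (𝒦 : Set (Subgroup K)) : Prop :=
  InvariantMean K (Cos K 𝒦)

/-- The family generated by a set `ℋ` of subgroups: all subgroups of conjugates of
members of `ℋ`, together with the trivial subgroup. -/
def famGen (ℋ : Set (Subgroup G)) : Set (Subgroup G) :=
  {K | K = ⊥ ∨ ∃ H ∈ ℋ, ∃ g : G, ∀ x ∈ K, g⁻¹ * x * g ∈ H}

/-- The left multiplication action of `g ∈ G` on a normed `ℝG`-module `W`, as a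
continuous linear map. -/
def smulCLM {W : Type w} [NormedAddCommGroup W] [NormedSpace ℝ W] [DistribMulAction G W]
    [SMulCommClass G ℝ W] (hW : ∀ (g : G) (w : W), ‖g • w‖ = ‖w‖) (g : G) : W →L[ℝ] W :=
  LinearMap.mkContinuous
    { toFun := fun w => g • w
      map_add' := fun a b => smul_add g a b
      map_smul' := fun r w => smul_comm g r w }
    1 (fun w => by simp [hW])

/-! ### Auxiliary material: the sup norm on `Linf S` -/

section LinfNorm

variable {S : Type v}

/-- The sup norm on `Linf S`. -/
noncomputable def linfNorm (f : Linf S) : ℝ :=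
  sSup (Set.range fun s => |(f : S → ℝ) s|)

lemma linfNorm_bddAbove (f : Linf S) : BddAbove (Set.range fun s => |(f : S → ℝ) s|) := by
  obtain ⟨C, hC⟩ := f.2
  exact ⟨C, by rintro x ⟨s, rfl⟩; exact hC s⟩

lemma abs_le_linfNorm (f : Linf S) (s : S) : |(f : S → ℝ) s| ≤ linfNorm f :=
  le_csSup (linfNorm_bddAbove f) ⟨s, rfl⟩

lemma linfNorm_le {f : Linf S} {C : ℝ} (h0 : 0 ≤ C) (h : ∀ s, |(f : S → ℝ) s| ≤ C) :
    linfNorm f ≤ C :=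
  Real.sSup_le (by rintro x ⟨s, rfl⟩; exact h s) h0

lemma linfNorm_nonneg (f : Linf S) : 0 ≤ linfNorm f :=
  Real.sSup_nonneg (by rintro x ⟨s, rfl⟩; exact abs_nonneg _)

noncomputable instance : NormedAddCommGroup (Linf S) :=
  AddGroupNorm.toNormedAddCommGroup
    { toFun := linfNorm
      map_zero' := le_antisymm
        (linfNorm_le le_rfl fun s => by
          show |(0 : ℝ)| ≤ 0
          simp)
        (linfNorm_nonneg 0)
      add_le' := fun f g =>
        linfNorm_le (add_nonneg (linfNorm_nonneg f) (linfNorm_nonneg g)) fun s =>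
          (abs_add_le _ _).trans (add_le_add (abs_le_linfNorm f s) (abs_le_linfNorm g s))
      neg' := fun f =>
        congrArg (fun h : S → ℝ => sSup (Set.range h)) (funext fun s => abs_neg ((f : S → ℝ) s))
      eq_zero_of_map_eq_zero' := fun f hf =>
        Subtype.ext (funext fun s => by
          have h := (abs_le_linfNorm f s).trans (le_of_eq hf)
          exact abs_eq_zero.mp (le_antisymm h (abs_nonneg _))) }

noncomputable instance (priority := 3000) : UniformSpace (Linf S) :=
  PseudoMetricSpace.toUniformSpace

noncomputable instance (priority := 3000) : TopologicalSpace (Linf S) :=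
  UniformSpace.toTopologicalSpace

lemma linf_norm_def (f : Linf S) : ‖f‖ = linfNorm f := rfl

lemma abs_le_norm (f : Linf S) (s : S) : |(f : S → ℝ) s| ≤ ‖f‖ := by
  rw [linf_norm_def]; exact abs_le_linfNorm f s

lemma norm_linf_le {f : Linf S} {C : ℝ} (h0 : 0 ≤ C) (h : ∀ s, |(f : S → ℝ) s| ≤ C) :
    ‖f‖ ≤ C := by
  rw [linf_norm_def]; exact linfNorm_le h0 h

noncomputable instance : NormedSpace ℝ (Linf S) where
  norm_smul_le r f := by
    refine linfNorm_le (mul_nonneg (norm_nonneg r) (linfNorm_nonneg f)) fun s => ?_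
    show |r * (f : S → ℝ) s| ≤ ‖r‖ * linfNorm f
    rw [abs_mul, Real.norm_eq_abs]
    exact mul_le_mul_of_nonneg_left (abs_le_linfNorm f s) (abs_nonneg r)

end LinfNorm

/-! ### The `G`-action on `Linf S` -/

section LinfAction

variable {S : Type v} [MulAction G S]

instance : SMul G (Linf S) :=
  ⟨fun g f => compL (fun s => g⁻¹ • s) f⟩

lemma linf_gsmul_def (g : G) (f : Linf S) : g • f = compL (fun s => g⁻¹ • s) f := rfl

lemma linf_gsmul_apply (g : G) (f : Linf S) (s : S) :
    ((g • f : Linf S) : S → ℝ) s = (f : S → ℝ) (g⁻¹ • s) := rfl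

instance : MulAction G (Linf S) where
  one_smul f := Subtype.ext (funext fun s => by
    show (f : S → ℝ) ((1 : G)⁻¹ • s) = (f : S → ℝ) s
    rw [inv_one, one_smul])
  mul_smul g h f := Subtype.ext (funext fun s => by
    show (f : S → ℝ) ((g * h)⁻¹ • s) = (f : S → ℝ) (h⁻¹ • g⁻¹ • s)
    rw [mul_inv_rev, mul_smul])

instance : DistribMulAction G (Linf S) where
  smul_zero g := Subtype.ext rfl
  smul_add g f₁ f₂ := Subtype.ext rfl

instance : SMulCommClass G ℝ (Linf S) := ⟨fun g r f => Subtype.ext rfl⟩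

lemma linf_norm_gsmul (g : G) (f : Linf S) : ‖g • f‖ = ‖f‖ := by
  show linfNorm (g • f) = linfNorm f
  unfold linfNorm
  have h1 : (fun s => |((g • f : Linf S) : S → ℝ) s|) =
      (fun s => |(f : S → ℝ) s|) ∘ (fun s : S => g⁻¹ • s) := rfl
  rw [h1, Function.Surjective.range_comp (MulAction.bijective (g⁻¹ : G)).surjective]

end LinfAction

/-! ### Positivization: from an invariant normalized functional to an invariant mean -/

section Mean

variable {S : Type v}

/-- `f` is (pointwise) nonnegative. -/
def Nn (f : Linf S) : Prop := ∀ s, 0 ≤ (f : S → ℝ) s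

/-- Positive part. -/
noncomputable def posPart (f : Linf S) : Linf S :=
  ⟨fun s => max ((f : S → ℝ) s) 0, by
    obtain ⟨C, hC⟩ := f.2
    refine ⟨C, fun s => ?_⟩
    rw [abs_of_nonneg (le_max_right _ _)]
    exact max_le ((le_abs_self _).trans (hC s)) ((abs_nonneg _).trans (hC s))⟩

/-- Negative part. -/
noncomputable def negPart (f : Linf S) : Linf S := posPart (-f)

lemma posPart_apply (f : Linf S) (s : S) :
    ((posPart f : Linf S) : S → ℝ) s = max ((f : S → ℝ) s) 0 := rfl

lemma negPart_apply (f : Linf S) (s : S) :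
    ((negPart f : Linf S) : S → ℝ) s = max (-(f : S → ℝ) s) 0 := rfl

lemma posPart_nonneg (f : Linf S) : Nn (posPart f) := fun s => le_max_right _ _

lemma negPart_nonneg (f : Linf S) : Nn (negPart f) := fun s => le_max_right _ _

lemma posPart_sub_negPart (f : Linf S) : posPart f - negPart f = f :=
  Subtype.ext (funext fun s => by
    show max ((f : S → ℝ) s) 0 - max (-(f : S → ℝ) s) 0 = (f : S → ℝ) s
    rcases le_total ((f : S → ℝ) s) 0 with h | h
    · rw [max_eq_right h, max_eq_left (neg_nonneg.mpr h)]; ring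
    · rw [max_eq_left h, max_eq_right (neg_nonpos.mpr h)]; ring)

lemma posPart_of_nonneg {f : Linf S} (hf : Nn f) : posPart f = f :=
  Subtype.ext (funext fun s => max_eq_left (hf s))

lemma negPart_of_nonneg {f : Linf S} (hf : Nn f) : negPart f = 0 :=
  Subtype.ext (funext fun s => max_eq_right (neg_nonpos.mpr (hf s)))

variable (φ : Linf S →ₗ[ℝ] ℝ)

/-- The set of values of `φ` on functions squeezed between `0` and `f`. -/
def posSet (f : Linf S) : Set ℝ :=
  φ '' {u : Linf S | Nn u ∧ ∀ s, (u : S → ℝ) s ≤ (f : S → ℝ) s}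

/-- The "positive part" of the functional `φ`, on nonnegative functions. -/
noncomputable def pfn (f : Linf S) : ℝ := sSup (posSet φ f)

variable {φ}

lemma posSet_nonempty {f : Linf S} (hf : Nn f) : (posSet φ f).Nonempty :=
  ⟨φ 0, ⟨0, ⟨fun _ => le_rfl, fun s => hf s⟩, rfl⟩⟩

variable {M : ℝ}

lemma posSet_bddAbove
    (hM : ∀ (u : Linf S) (C : ℝ), 0 ≤ C → (∀ s, |(u : S → ℝ) s| ≤ C) → φ u ≤ M * C)
    (f : Linf S) : BddAbove (posSet φ f) := by
  obtain ⟨C, hC⟩ := f.2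
  refine ⟨M * |C|, ?_⟩
  rintro x ⟨u, ⟨hu0, huf⟩, rfl⟩
  refine hM u |C| (abs_nonneg C) fun s => ?_
  rw [abs_of_nonneg (hu0 s)]
  exact (huf s).trans ((le_abs_self _).trans ((hC s).trans (le_abs_self C)))

lemma le_pfn
    (hM : ∀ (u : Linf S) (C : ℝ), 0 ≤ C → (∀ s, |(u : S → ℝ) s| ≤ C) → φ u ≤ M * C)
    {f u : Linf S} (hu0 : Nn u) (huf : ∀ s, (u : S → ℝ) s ≤ (f : S → ℝ) s) :
    φ u ≤ pfn φ f :=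
  le_csSup (posSet_bddAbove hM f) ⟨u, ⟨hu0, huf⟩, rfl⟩

lemma pfn_nonneg
    (hM : ∀ (u : Linf S) (C : ℝ), 0 ≤ C → (∀ s, |(u : S → ℝ) s| ≤ C) → φ u ≤ M * C)
    {f : Linf S} (hf : Nn f) : 0 ≤ pfn φ f := by
  have h := le_pfn (f := f) (u := 0) hM (fun _ => le_rfl) (fun s => hf s)
  rwa [map_zero] at h

lemma pfn_zero : pfn φ (0 : Linf S) = 0 := by
  have h : posSet φ 0 = {0} := by
    ext x
    constructor
    · rintro ⟨u, ⟨hu0, hu⟩, rfl⟩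
      have hu' : u = 0 := Subtype.ext (funext fun s => le_antisymm (hu s) (hu0 s))
      simp [hu']
    · intro hx
      rw [Set.mem_singleton_iff] at hx
      subst hx
      exact ⟨0, ⟨fun _ => le_rfl, fun _ => le_rfl⟩, map_zero φ⟩
  rw [pfn, h, csSup_singleton]

lemma pfn_add
    (hM : ∀ (u : Linf S) (C : ℝ), 0 ≤ C → (∀ s, |(u : S → ℝ) s| ≤ C) → φ u ≤ M * C)
    {f g : Linf S} (hf : Nn f) (hg : Nn g) :
    pfn φ (f + g) = pfn φ f + pfn φ g := by
  apply le_antisymm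
  · refine csSup_le (posSet_nonempty (fun s => add_nonneg (hf s) (hg s))) ?_
    rintro x ⟨w, ⟨hw0, hwfg⟩, rfl⟩
    have hwfg' : ∀ s, (w : S → ℝ) s ≤ (f : S → ℝ) s + (g : S → ℝ) s := fun s => hwfg s
    have hbu : ∃ C : ℝ, ∀ s, |min ((w : S → ℝ) s) ((f : S → ℝ) s)| ≤ C := by
      obtain ⟨C, hC⟩ := f.2
      refine ⟨C, fun s => ?_⟩
      rw [abs_of_nonneg (le_min (hw0 s) (hf s))]
      exact (min_le_right _ _).trans ((le_abs_self _).trans (hC s))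
    set u : Linf S := ⟨fun s => min ((w : S → ℝ) s) ((f : S → ℝ) s), hbu⟩ with hu_def
    have hu0 : Nn u := fun s => le_min (hw0 s) (hf s)
    have huf : ∀ s, (u : S → ℝ) s ≤ (f : S → ℝ) s := fun s => min_le_right _ _
    have hv0 : Nn (w - u) := fun s => by
      show 0 ≤ (w : S → ℝ) s - min ((w : S → ℝ) s) ((f : S → ℝ) s)
      have h := min_le_left ((w : S → ℝ) s) ((f : S → ℝ) s)
      linarith
    have hvg : ∀ s, ((w - u : Linf S) : S → ℝ) s ≤ (g : S → ℝ) s := fun s => by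
      show (w : S → ℝ) s - min ((w : S → ℝ) s) ((f : S → ℝ) s) ≤ (g : S → ℝ) s
      have h1 : (w : S → ℝ) s - (g : S → ℝ) s ≤ (w : S → ℝ) s := by
        have := hg s; linarith
      have h2 : (w : S → ℝ) s - (g : S → ℝ) s ≤ (f : S → ℝ) s := by
        have := hwfg' s; linarith
      have := le_min h1 h2
      linarith
    have hw_eq : φ w = φ u + φ (w - u) := by rw [map_sub]; ring
    rw [hw_eq]
    exact add_le_add (le_pfn hM hu0 huf) (le_pfn hM hv0 hvg)
  · have key : ∀ x ∈ posSet φ f, x + pfn φ g ≤ pfn φ (f + g) := by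
      rintro x ⟨u, ⟨hu0, huf⟩, rfl⟩
      have h2 : pfn φ g ≤ pfn φ (f + g) - φ u := by
        refine csSup_le (posSet_nonempty hg) ?_
        rintro y ⟨v, ⟨hv0, hvg⟩, rfl⟩
        have h3 : φ (u + v) ≤ pfn φ (f + g) :=
          le_pfn hM (fun s => add_nonneg (hu0 s) (hv0 s))
            (fun s => add_le_add (huf s) (hvg s))
        rw [map_add] at h3
        linarith
      linarith
    have h4 : pfn φ f ≤ pfn φ (f + g) - pfn φ g := by
      refine csSup_le (posSet_nonempty hf) fun x hx => ?_
      have := key x hx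
      linarith
    linarith

lemma pfn_smul
    (hM : ∀ (u : Linf S) (C : ℝ), 0 ≤ C → (∀ s, |(u : S → ℝ) s| ≤ C) → φ u ≤ M * C)
    {f : Linf S} (hf : Nn f) {r : ℝ} (hr : 0 ≤ r) :
    pfn φ (r • f) = r * pfn φ f := by
  rcases eq_or_lt_of_le hr with hr0 | hrpos
  · rw [← hr0, zero_smul, pfn_zero, zero_mul]
  · have hrne : r ≠ 0 := ne_of_gt hrpos
    apply le_antisymm
    · refine csSup_le (posSet_nonempty (fun s => mul_nonneg hr (hf s))) ?_
      rintro x ⟨u, ⟨hu0, hu⟩, rfl⟩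
      have h1 : φ u = r * φ (r⁻¹ • u) := by
        rw [map_smul, smul_eq_mul, ← mul_assoc, mul_inv_cancel₀ hrne, one_mul]
      rw [h1]
      refine mul_le_mul_of_nonneg_left
        (le_pfn hM (fun s => mul_nonneg (inv_nonneg.mpr hr) (hu0 s)) (fun s => ?_)) hr
      show r⁻¹ * (u : S → ℝ) s ≤ (f : S → ℝ) s
      have h2 : (u : S → ℝ) s ≤ r * (f : S → ℝ) s := hu s
      calc r⁻¹ * (u : S → ℝ) s ≤ r⁻¹ * (r * (f : S → ℝ) s) :=
            mul_le_mul_of_nonneg_left h2 (inv_nonneg.mpr hr)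
        _ = (f : S → ℝ) s := by field_simp
    · have h5 : pfn φ f ≤ r⁻¹ * pfn φ (r • f) := by
        refine csSup_le (posSet_nonempty hf) ?_
        rintro x ⟨u, ⟨hu0, hu⟩, rfl⟩
        have h1 : φ u = r⁻¹ * φ (r • u) := by
          rw [map_smul, smul_eq_mul, ← mul_assoc, inv_mul_cancel₀ hrne, one_mul]
        rw [h1]
        refine mul_le_mul_of_nonneg_left
          (le_pfn hM (fun s => mul_nonneg hr (hu0 s)) (fun s => ?_)) (inv_nonneg.mpr hr)
        show r * (u : S → ℝ) s ≤ r * (f : S → ℝ) s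
        exact mul_le_mul_of_nonneg_left (hu s) hr
      calc r * pfn φ f ≤ r * (r⁻¹ * pfn φ (r • f)) := mul_le_mul_of_nonneg_left h5 hr
        _ = pfn φ (r • f) := by field_simp

section MeanAction

variable [MulAction G S]

lemma posSet_gsmul_subset
    (hinv : ∀ (g : G) (f : Linf S), φ (compL (fun s => g⁻¹ • s) f) = φ f)
    (g : G) (f : Linf S) : posSet φ (g • f) ⊆ posSet φ f := by
  rintro x ⟨v, ⟨hv0, hvf⟩, rfl⟩
  refine ⟨g⁻¹ • v, ⟨fun s => ?_, fun s => ?_⟩, ?_⟩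
  · show 0 ≤ (v : S → ℝ) ((g⁻¹)⁻¹ • s)
    exact hv0 _
  · show (v : S → ℝ) ((g⁻¹)⁻¹ • s) ≤ (f : S → ℝ) s
    have h := hvf ((g⁻¹)⁻¹ • s)
    rw [linf_gsmul_apply] at h
    simp only [inv_inv] at h ⊢
    rwa [inv_smul_smul] at h
  · exact hinv g⁻¹ v
lemma posSet_gsmul
    (hinv : ∀ (g : G) (f : Linf S), φ (compL (fun s => g⁻¹ • s) f) = φ f)
    (g : G) (f : Linf S) : posSet φ (g • f) = posSet φ f := by
  refine subset_antisymm (posSet_gsmul_subset hinv g f) ?_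
  have h := posSet_gsmul_subset hinv g⁻¹ (g • f)
  rwa [inv_smul_smul] at h

lemma pfn_gsmul
    (hinv : ∀ (g : G) (f : Linf S), φ (compL (fun s => g⁻¹ • s) f) = φ f)
    (g : G) (f : Linf S) : pfn φ (g • f) = pfn φ f := by
  rw [pfn, pfn, posSet_gsmul hinv]

lemma posPart_gsmul (g : G) (f : Linf S) : posPart (g • f) = g • posPart f :=
  Subtype.ext rfl

lemma negPart_gsmul (g : G) (f : Linf S) : negPart (g • f) = g • negPart f :=
  Subtype.ext rfl

end MeanAction

variable (φ) in
/-- The positivization of `φ` on all of `Linf S`. -/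
noncomputable def lfn (f : Linf S) : ℝ := pfn φ (posPart f) - pfn φ (negPart f)

lemma lfn_eq
    (hM : ∀ (u : Linf S) (C : ℝ), 0 ≤ C → (∀ s, |(u : S → ℝ) s| ≤ C) → φ u ≤ M * C)
    {f a b : Linf S} (ha : Nn a) (hb : Nn b) (hab : f = a - b) :
    lfn φ f = pfn φ a - pfn φ b := by
  have key : posPart f + b = negPart f + a := by
    refine Subtype.ext (funext fun s => ?_)
    have hfs : (f : S → ℝ) s = (a : S → ℝ) s - (b : S → ℝ) s := by rw [hab]; rfl
    show max ((f : S → ℝ) s) 0 + (b : S → ℝ) s = max (-(f : S → ℝ) s) 0 + (a : S → ℝ) s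
    rcases le_total ((a : S → ℝ) s) ((b : S → ℝ) s) with h | h
    · rw [hfs, max_eq_right (by linarith), max_eq_left (by linarith)]; ring
    · rw [hfs, max_eq_left (by linarith), max_eq_right (by linarith)]; ring
  have h2 := pfn_add hM (posPart_nonneg f) hb
  have h3 := pfn_add hM (negPart_nonneg f) ha
  rw [key, h3] at h2
  unfold lfn
  linarith

lemma lfn_add
    (hM : ∀ (u : Linf S) (C : ℝ), 0 ≤ C → (∀ s, |(u : S → ℝ) s| ≤ C) → φ u ≤ M * C)
    (f g : Linf S) : lfn φ (f + g) = lfn φ f + lfn φ g := by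
  have hab : f + g = (posPart f + posPart g) - (negPart f + negPart g) := by
    have h : posPart f + posPart g - (negPart f + negPart g) =
        (posPart f - negPart f) + (posPart g - negPart g) := by abel
    rw [h, posPart_sub_negPart, posPart_sub_negPart]
  rw [lfn_eq hM (fun s => add_nonneg (posPart_nonneg f s) (posPart_nonneg g s))
      (fun s => add_nonneg (negPart_nonneg f s) (negPart_nonneg g s)) hab,
    pfn_add hM (posPart_nonneg f) (posPart_nonneg g),
    pfn_add hM (negPart_nonneg f) (negPart_nonneg g)]
  unfold lfn
  ring

lemma lfn_smul
    (hM : ∀ (u : Linf S) (C : ℝ), 0 ≤ C → (∀ s, |(u : S → ℝ) s| ≤ C) → φ u ≤ M * C)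
    (r : ℝ) (f : Linf S) : lfn φ (r • f) = r * lfn φ f := by
  rcases le_total 0 r with hr | hr
  · have hab : r • f = r • posPart f - r • negPart f := by
      rw [← smul_sub, posPart_sub_negPart]
    rw [lfn_eq hM (fun s => mul_nonneg hr (posPart_nonneg f s))
        (fun s => mul_nonneg hr (negPart_nonneg f s)) hab,
      pfn_smul hM (posPart_nonneg f) hr, pfn_smul hM (negPart_nonneg f) hr]
    unfold lfn
    ring
  · have hr' : 0 ≤ -r := neg_nonneg.mpr hr
    have hab : r • f = (-r) • negPart f - (-r) • posPart f := by
      rw [← smul_sub, ← neg_sub (posPart f), smul_neg, neg_smul, neg_neg,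
        posPart_sub_negPart]
    rw [lfn_eq hM (fun s => mul_nonneg hr' (negPart_nonneg f s))
        (fun s => mul_nonneg hr' (posPart_nonneg f s)) hab,
      pfn_smul hM (negPart_nonneg f) hr', pfn_smul hM (posPart_nonneg f) hr']
    unfold lfn
    ring

lemma lfn_of_nonneg {f : Linf S} (hf : Nn f) : lfn φ f = pfn φ f := by
  unfold lfn
  rw [posPart_of_nonneg hf, negPart_of_nonneg hf, pfn_zero, sub_zero]

/-- The main positivization lemma: an invariant normalized bounded functional on
`ℓ∞(S)` yields an invariant mean. -/
theorem invariantMean_of_functional {S : Type v} [MulAction G S]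
    (φ : Linf S →ₗ[ℝ] ℝ) (M : ℝ)
    (hM : ∀ (u : Linf S) (C : ℝ), 0 ≤ C → (∀ s, |(u : S → ℝ) s| ≤ C) → φ u ≤ M * C)
    (h1 : φ (constLinf S 1) = 1)
    (hinv : ∀ (g : G) (f : Linf S), φ (compL (fun s => g⁻¹ • s) f) = φ f) :
    InvariantMean G S := by
  have h1nn : Nn (constLinf S 1) := fun s => zero_le_one
  have hP1 : 1 ≤ pfn φ (constLinf S 1) := by
    calc (1 : ℝ) = φ (constLinf S 1) := h1.symm
      _ ≤ pfn φ (constLinf S 1) := le_pfn hM h1nn (fun s => le_rfl)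
  have hP1pos : 0 < pfn φ (constLinf S 1) := lt_of_lt_of_le one_pos hP1
  set c : ℝ := (pfn φ (constLinf S 1))⁻¹ with hc
  refine ⟨{ toFun := fun f => c * lfn φ f
            map_add' := fun f g => by
              show c * lfn φ (f + g) = c * lfn φ f + c * lfn φ g
              rw [lfn_add hM]; ring
            map_smul' := fun r f => by
              show c * lfn φ (r • f) = r * (c * lfn φ f)
              rw [lfn_smul hM]; ring }, ?_, ?_, ?_⟩
  · show c * lfn φ (constLinf S 1) = 1
    rw [lfn_of_nonneg h1nn, hc]
    exact inv_mul_cancel₀ (ne_of_gt hP1pos)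
  · intro f hf
    show 0 ≤ c * lfn φ f
    have hlf : lfn φ f = pfn φ f := lfn_of_nonneg hf
    exact mul_nonneg (inv_nonneg.mpr hP1pos.le) (hlf ▸ pfn_nonneg hM hf)
  · intro g f
    show c * lfn φ (compL (fun s => g⁻¹ • s) f) = c * lfn φ f
    have h : compL (fun s : S => g⁻¹ • s) f = g • f := rfl
    rw [h]
    unfold lfn
    rw [posPart_gsmul, negPart_gsmul, pfn_gsmul hinv, pfn_gsmul hinv]

end Mean

/-! ### Means are automatically bounded -/

lemma mean_abs_le {S : Type v} (m : Linf S →ₗ[ℝ] ℝ)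
    (h1 : m (constLinf S 1) = 1)
    (hpos : ∀ f : Linf S, (∀ s, 0 ≤ (f : S → ℝ) s) → 0 ≤ m f)
    (f : Linf S) (C : ℝ) (hC : ∀ s, |(f : S → ℝ) s| ≤ C) : |m f| ≤ C := by
  have hconst : ∀ r : ℝ, m (r • constLinf S 1) = r := fun r => by
    rw [map_smul, smul_eq_mul, h1, mul_one]
  have h1' : 0 ≤ m (C • constLinf S 1 - f) := by
    refine hpos _ fun s => ?_
    show 0 ≤ C * 1 - (f : S → ℝ) s
    have := (abs_le.mp (hC s)).2
    linarith
  have h2' : 0 ≤ m (C • constLinf S 1 + f) := by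
    refine hpos _ fun s => ?_
    show 0 ≤ C * 1 + (f : S → ℝ) s
    have := (abs_le.mp (hC s)).1
    linarith
  rw [map_sub, hconst] at h1'
  rw [map_add, hconst] at h2'
  exact abs_le.mpr ⟨by linarith, by linarith⟩

/-! ### The backward direction: auxiliary continuous linear maps -/

/-- A one-point type, opaque to instance search. -/
def Pt : Type w := PUnit

/-- The point. -/
def Pt.pt : Pt.{w} := PUnit.unit

instance : Subsingleton Pt.{w} := inferInstanceAs (Subsingleton PUnit)

instance : MulAction G Pt.{w} where
  smul _ x := x
  one_smul _ := rfl
  mul_smul _ _ _ := rfl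

section Backward

attribute [-instance] instTopologicalSpaceSubtype instUniformSpaceSubtype

lemma norm_constLinf_le (T : Type v) (c : ℝ) : ‖constLinf T c‖ ≤ |c| :=
  norm_linf_le (abs_nonneg c) (fun _ => le_rfl)

variable (S : Type v)

/-- The inclusion of constants `ℓ∞(pt) → ℓ∞(S)`. -/
noncomputable def inclCLM : Linf (Pt.{u}) →L[ℝ] Linf S :=
  LinearMap.mkContinuous
    { toFun := fun a : Linf (Pt.{u}) => constLinf S ((a : Pt.{u} → ℝ) Pt.pt)
      map_add' := fun a b => Subtype.ext rfl
      map_smul' := fun r a => Subtype.ext rfl }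
    1
    (fun a => by
      rw [one_mul]
      refine le_trans (norm_constLinf_le S ((a : Pt.{u} → ℝ) Pt.pt)) ?_
      exact abs_le_norm a Pt.pt)

lemma inclCLM_apply (a : Linf (Pt.{u})) :
    inclCLM S a = constLinf S ((a : Pt.{u} → ℝ) Pt.pt) := rfl

/-- Evaluation at a point, as a continuous linear map `ℓ∞(S) → ℓ∞(pt)`. -/
noncomputable def projCLM (s₀ : S) : Linf S →L[ℝ] Linf (Pt.{u}) :=
  LinearMap.mkContinuous
    { toFun := fun f : Linf S => constLinf Pt.{u} ((f : S → ℝ) s₀)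
      map_add' := fun f g => Subtype.ext rfl
      map_smul' := fun r f => Subtype.ext rfl }
    1
    (fun f => by
      rw [one_mul]
      refine le_trans (norm_constLinf_le Pt.{u} ((f : S → ℝ) s₀)) ?_
      exact abs_le_norm f s₀)

lemma projCLM_apply (s₀ : S) (f : Linf S) :
    projCLM S s₀ f = constLinf Pt.{u} ((f : S → ℝ) s₀) := rfl

lemma projCLM_norm_le (s₀ : S) : ‖projCLM S s₀‖ ≤ 1 :=
  LinearMap.mkContinuous_norm_le _ zero_le_one _

/-- Evaluation `ℓ∞(pt) → ℝ`. -/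
noncomputable def evalRCLM : Linf (Pt.{u}) →L[ℝ] ℝ :=
  LinearMap.mkContinuous
    { toFun := fun a : Linf (Pt.{u}) => (a : Pt.{u} → ℝ) Pt.pt
      map_add' := fun a b => rfl
      map_smul' := fun r a => rfl }
    1
    (fun a => by
      rw [one_mul, Real.norm_eq_abs]
      show |(a : Pt.{u} → ℝ) Pt.pt| ≤ ‖a‖
      exact abs_le_norm a Pt.pt)

lemma evalRCLM_apply (a : Linf (Pt.{u})) :
    evalRCLM a = (a : Pt.{u} → ℝ) Pt.pt := rfl

end Backward


/-! ### The forward direction: the extension functional -/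

section Forward

variable {F : Set (Subgroup G)}
variable {A B : Type u}
variable [NormedAddCommGroup A] [NormedSpace ℝ A] [DistribMulAction G A] [SMulCommClass G ℝ A]
variable [NormedAddCommGroup B] [NormedSpace ℝ B] [DistribMulAction G B] [SMulCommClass G ℝ B]
variable (σ : ∀ H : Subgroup G, H ∈ F → (B →L[ℝ] A)) (ψ : A →L[ℝ] ℝ)

/-- The function `x = gH ↦ ψ(g • σ_H(g⁻¹ • b))` on `G/F`. -/
noncomputable def evalFun (b : B) (x : Cos G F) : ℝ :=
  ψ ((Quotient.out x.2 : G) • σ x.1.1 x.1.2 ((Quotient.out x.2 : G)⁻¹ • b))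

variable {σ ψ}

lemma evalFun_indep (hψ : ∀ (g : G) (a : A), ψ (g • a) = ψ a)
    (hσe : ∀ (H : Subgroup G) (hH : H ∈ F), ∀ h : G, h ∈ H →
      ∀ b : B, σ H hH (h • b) = h • σ H hH b)
    {H : Subgroup G} (hH : H ∈ F) {g g' : G} (hgg' : (g : G ⧸ H) = (g' : G ⧸ H)) (b : B) :
    ψ (g • σ H hH (g⁻¹ • b)) = ψ (g' • σ H hH (g'⁻¹ • b)) := by
  have hmem : g⁻¹ * g' ∈ H := QuotientGroup.eq.mp hgg'
  have h1 : (g'⁻¹ : G) = (g⁻¹ * g')⁻¹ * g⁻¹ := by group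
  calc ψ (g • σ H hH (g⁻¹ • b)) = ψ (σ H hH (g⁻¹ • b)) := hψ _ _
    _ = ψ ((g⁻¹ * g')⁻¹ • σ H hH (g⁻¹ • b)) := (hψ _ _).symm
    _ = ψ (σ H hH ((g⁻¹ * g')⁻¹ • g⁻¹ • b)) := by rw [hσe H hH _ (inv_mem hmem)]
    _ = ψ (σ H hH (g'⁻¹ • b)) := by rw [← mul_smul, ← h1]
    _ = ψ (g' • σ H hH (g'⁻¹ • b)) := (hψ _ _).symm

lemma evalFun_mk (hψ : ∀ (g : G) (a : A), ψ (g • a) = ψ a)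
    (hσe : ∀ (H : Subgroup G) (hH : H ∈ F), ∀ h : G, h ∈ H →
      ∀ b : B, σ H hH (h • b) = h • σ H hH b)
    (b : B) {H : Subgroup G} (hH : H ∈ F) (g : G) :
    evalFun σ ψ b ⟨⟨H, hH⟩, (g : G ⧸ H)⟩ = ψ (g • σ H hH (g⁻¹ • b)) :=
  evalFun_indep hψ hσe hH (QuotientGroup.out_eq' (g : G ⧸ H)) b

lemma evalFun_abs_le (hA : ∀ (g : G) (a : A), ‖g • a‖ = ‖a‖)
    (hB : ∀ (g : G) (b : B), ‖g • b‖ = ‖b‖)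
    {K : ℝ} (hσn : ∀ (H : Subgroup G) (hH : H ∈ F), ‖σ H hH‖ ≤ K) (b : B) (x : Cos G F) :
    |evalFun σ ψ b x| ≤ ‖ψ‖ * K * ‖b‖ := by
  obtain ⟨⟨H, hH⟩, q⟩ := x
  have h1 : ‖σ H hH ((Quotient.out q : G)⁻¹ • b)‖ ≤ K * ‖b‖ := by
    have h2 := (σ H hH).le_opNorm ((Quotient.out q : G)⁻¹ • b)
    rw [hB] at h2
    exact h2.trans (mul_le_mul_of_nonneg_right (hσn H hH) (norm_nonneg b))
  have h3 := ψ.le_opNorm ((Quotient.out q : G) • σ H hH ((Quotient.out q : G)⁻¹ • b))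
  rw [hA, Real.norm_eq_abs] at h3
  show |ψ ((Quotient.out q : G) • σ H hH ((Quotient.out q : G)⁻¹ • b))| ≤ ‖ψ‖ * K * ‖b‖
  calc |ψ ((Quotient.out q : G) • σ H hH ((Quotient.out q : G)⁻¹ • b))|
      ≤ ‖ψ‖ * ‖σ H hH ((Quotient.out q : G)⁻¹ • b)‖ := h3
    _ ≤ ‖ψ‖ * (K * ‖b‖) := mul_le_mul_of_nonneg_left h1 (norm_nonneg ψ)
    _ = ‖ψ‖ * K * ‖b‖ := (mul_assoc _ _ _).symm

variable (σ ψ) in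
/-- The element of `ℓ∞(G/F)` associated to `b : B`. -/
noncomputable def FB (hA : ∀ (g : G) (a : A), ‖g • a‖ = ‖a‖)
    (hB : ∀ (g : G) (b : B), ‖g • b‖ = ‖b‖)
    {K : ℝ} (hσn : ∀ (H : Subgroup G) (hH : H ∈ F), ‖σ H hH‖ ≤ K) (b : B) :
    Linf (Cos G F) :=
  ⟨evalFun σ ψ b, ⟨‖ψ‖ * K * ‖b‖, evalFun_abs_le hA hB hσn b⟩⟩

variable (hA : ∀ (g : G) (a : A), ‖g • a‖ = ‖a‖)
variable (hB : ∀ (g : G) (b : B), ‖g • b‖ = ‖b‖)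
variable {K : ℝ} (hσn : ∀ (H : Subgroup G) (hH : H ∈ F), ‖σ H hH‖ ≤ K)
variable (hψ : ∀ (g : G) (a : A), ψ (g • a) = ψ a)
variable (hσe : ∀ (H : Subgroup G) (hH : H ∈ F), ∀ h : G, h ∈ H →
  ∀ b : B, σ H hH (h • b) = h • σ H hH b)

include hψ hσe in
lemma FB_add (b b' : B) :
    FB σ ψ hA hB hσn (b + b') = FB σ ψ hA hB hσn b + FB σ ψ hA hB hσn b' := by
  refine Subtype.ext (funext fun x => ?_)
  obtain ⟨⟨H, hH⟩, q⟩ := x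
  refine Quotient.inductionOn' q (fun g => ?_)
  show evalFun σ ψ (b + b') ⟨⟨H, hH⟩, (g : G ⧸ H)⟩ =
    evalFun σ ψ b ⟨⟨H, hH⟩, (g : G ⧸ H)⟩ + evalFun σ ψ b' ⟨⟨H, hH⟩, (g : G ⧸ H)⟩
  rw [evalFun_mk hψ hσe, evalFun_mk hψ hσe, evalFun_mk hψ hσe, smul_add, map_add,
    smul_add, map_add]

include hψ hσe in
lemma FB_smul (r : ℝ) (b : B) :
    FB σ ψ hA hB hσn (r • b) = r • FB σ ψ hA hB hσn b := by
  refine Subtype.ext (funext fun x => ?_)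
  obtain ⟨⟨H, hH⟩, q⟩ := x
  refine Quotient.inductionOn' q (fun g => ?_)
  show evalFun σ ψ (r • b) ⟨⟨H, hH⟩, (g : G ⧸ H)⟩ =
    r * evalFun σ ψ b ⟨⟨H, hH⟩, (g : G ⧸ H)⟩
  rw [evalFun_mk hψ hσe, evalFun_mk hψ hσe]
  have e1 : (g⁻¹ : G) • (r • b) = r • ((g⁻¹ : G) • b) := smul_comm _ _ _
  have e2 : σ H hH (r • ((g⁻¹ : G) • b)) = r • σ H hH ((g⁻¹ : G) • b) :=
    (σ H hH).map_smul r _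
  have e3 : g • (r • σ H hH ((g⁻¹ : G) • b)) = r • (g • σ H hH ((g⁻¹ : G) • b)) :=
    smul_comm _ _ _
  have e4 : ψ (r • (g • σ H hH ((g⁻¹ : G) • b))) = r * ψ (g • σ H hH ((g⁻¹ : G) • b)) := by
    rw [ψ.map_smul, smul_eq_mul]
  rw [e1, e2, e3, e4]

include hψ hσe in
lemma FB_gsmul (g : G) (b : B) :
    FB σ ψ hA hB hσn (g • b) = g • FB σ ψ hA hB hσn b := by
  refine Subtype.ext (funext fun x => ?_)
  obtain ⟨⟨H, hH⟩, q⟩ := x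
  refine Quotient.inductionOn' q (fun k => ?_)
  have hq : (g⁻¹ • (⟨⟨H, hH⟩, (k : G ⧸ H)⟩ : Cos G F)) =
      ⟨⟨H, hH⟩, ((g⁻¹ * k : G) : G ⧸ H)⟩ := rfl
  show evalFun σ ψ (g • b) ⟨⟨H, hH⟩, (k : G ⧸ H)⟩ =
    evalFun σ ψ b (g⁻¹ • ⟨⟨H, hH⟩, (k : G ⧸ H)⟩)
  rw [hq, evalFun_mk hψ hσe, evalFun_mk hψ hσe]
  have h2 : (g⁻¹ * k)⁻¹ • b = k⁻¹ • g • b := by rw [mul_inv_rev, inv_inv, mul_smul]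
  rw [h2, hψ k, hψ (g⁻¹ * k)]

include hψ hσe in
lemma FB_of_section (i : A →L[ℝ] B)
    (hi : ∀ (g : G) (a : A), i (g • a) = g • i a)
    (hσs : ∀ (H : Subgroup G) (hH : H ∈ F), ∀ a : A, σ H hH (i a) = a) (a : A) :
    FB σ ψ hA hB hσn (i a) = (ψ a) • constLinf (Cos G F) 1 := by
  refine Subtype.ext (funext fun x => ?_)
  obtain ⟨⟨H, hH⟩, q⟩ := x
  refine Quotient.inductionOn' q (fun g => ?_)
  show evalFun σ ψ (i a) ⟨⟨H, hH⟩, (g : G ⧸ H)⟩ = ψ a * 1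
  rw [evalFun_mk hψ hσe, ← hi, hσs, smul_inv_smul, mul_one]

end Forward

/-- Proposition 4.9, (i) ⇔ (iii).  `G` is amenable relative to
the family `F` (the `G`-set `G/F` admits a `G`-invariant mean) if and only if the
trivial normed `ℝG`-module `ℝ` is relatively `F`-injective. -/
theorem relatively_amenable_iff_trivial_module_relatively_injective
    (G : Type u) [Group G] (F : Set (Subgroup G)) (hF : IsFamily F) :
    InvariantMean G (Cos G F) ↔
      ∀ (A B : Type u)
        [NormedAddCommGroup A] [NormedSpace ℝ A] [DistribMulAction G A]
        [SMulCommClass G ℝ A]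
        [NormedAddCommGroup B] [NormedSpace ℝ B] [DistribMulAction G B]
        [SMulCommClass G ℝ B],
        (∀ (g : G) (a : A), ‖g • a‖ = ‖a‖) → (∀ (g : G) (b : B), ‖g • b‖ = ‖b‖) →
        ∀ i : A →L[ℝ] B, (∀ (g : G) (a : A), i (g • a) = g • i a) →
        (∃ K : ℝ, 0 ≤ K ∧ ∀ H ∈ F, ∃ σ : B →L[ℝ] A,
          ‖σ‖ ≤ K ∧ (∀ h : G, h ∈ H → ∀ b, σ (h • b) = h • σ b) ∧ ∀ a, σ (i a) = a) →
        ∀ ψ : A →L[ℝ] ℝ, (∀ (g : G) (a : A), ψ (g • a) = ψ a) →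
        ∃ Ψ : B →L[ℝ] ℝ, (∀ (g : G) (b : B), Ψ (g • b) = Ψ b) ∧ ∀ a, Ψ (i a) = ψ a := by
  classical
  constructor
  · rintro ⟨m, hm1, hmpos, hminv⟩
    intro A B _ _ _ _ _ _ _ _ hA hB i hi hsec ψ hψ
    obtain ⟨K, hK0, hsec⟩ := hsec
    choose σ hσn hσe hσs using hsec
    refine ⟨LinearMap.mkContinuous
      { toFun := fun b => m (FB σ ψ hA hB hσn b)
        map_add' := fun b b' => by
          show m (FB σ ψ hA hB hσn (b + b')) =
            m (FB σ ψ hA hB hσn b) + m (FB σ ψ hA hB hσn b')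
          rw [FB_add hA hB hσn hψ hσe, map_add]
        map_smul' := fun r b => by
          show m (FB σ ψ hA hB hσn (r • b)) = r * m (FB σ ψ hA hB hσn b)
          rw [FB_smul hA hB hσn hψ hσe, map_smul, smul_eq_mul] }
      (‖ψ‖ * K) (fun b => ?_), fun g b => ?_, fun a => ?_⟩
    · show ‖m (FB σ ψ hA hB hσn b)‖ ≤ ‖ψ‖ * K * ‖b‖
      rw [Real.norm_eq_abs]
      exact mean_abs_le m hm1 hmpos _ _ (evalFun_abs_le hA hB hσn b)
    · show m (FB σ ψ hA hB hσn (g • b)) = m (FB σ ψ hA hB hσn b)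
      rw [FB_gsmul hA hB hσn hψ hσe]
      exact hminv g (FB σ ψ hA hB hσn b)
    · show m (FB σ ψ hA hB hσn (i a)) = ψ a
      rw [FB_of_section hA hB hσn hψ hσe i hi hσs, map_smul, smul_eq_mul, hm1, mul_one]
  · intro hInj
    have hi : ∀ (g : G) (a : Linf Pt.{u}),
        inclCLM (Cos G F) (g • a) = g • inclCLM (Cos G F) a :=
      fun g a => Subtype.ext rfl
    have hequiv : ∀ (H : Subgroup G) (hH : H ∈ F) (h : G), h ∈ H →
        ∀ f : Linf (Cos G F),
          projCLM (Cos G F) (⟨⟨H, hH⟩, ((1 : G) : G ⧸ H)⟩ : Cos G F) (h • f) =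
            h • projCLM (Cos G F) (⟨⟨H, hH⟩, ((1 : G) : G ⧸ H)⟩ : Cos G F) f := by
      intro H hH h hh f
      have hx : (h⁻¹ • (⟨⟨H, hH⟩, ((1 : G) : G ⧸ H)⟩ : Cos G F)) =
          (⟨⟨H, hH⟩, ((1 : G) : G ⧸ H)⟩ : Cos G F) := by
        have hq : (h⁻¹ • ((1 : G) : G ⧸ H)) = ((1 : G) : G ⧸ H) := by
          show ((h⁻¹ * 1 : G) : G ⧸ H) = ((1 : G) : G ⧸ H)
          rw [mul_one]
          exact QuotientGroup.eq.mpr (by simpa using hh)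
        exact congrArg (fun q => (⟨⟨H, hH⟩, q⟩ : Cos G F)) hq
      refine Subtype.ext (funext fun s => ?_)
      show ((h • f : Linf (Cos G F)) : Cos G F → ℝ)
          (⟨⟨H, hH⟩, ((1 : G) : G ⧸ H)⟩ : Cos G F) =
        (f : Cos G F → ℝ) (⟨⟨H, hH⟩, ((1 : G) : G ⧸ H)⟩ : Cos G F)
      rw [linf_gsmul_apply, hx]
    have hsect : ∀ (H : Subgroup G) (hH : H ∈ F) (a : Linf Pt.{u}),
        projCLM (Cos G F) (⟨⟨H, hH⟩, ((1 : G) : G ⧸ H)⟩ : Cos G F)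
          (inclCLM (Cos G F) a) = a := by
      intro H hH a
      refine Subtype.ext (funext fun s => ?_)
      show (a : Pt.{u} → ℝ) Pt.pt = (a : Pt.{u} → ℝ) s
      exact congrArg (a : Pt.{u} → ℝ) (Subsingleton.elim Pt.pt s)
    obtain ⟨Ψ, hΨinv, hΨi⟩ := hInj (Linf Pt.{u}) (Linf (Cos G F))
      (fun g a => linf_norm_gsmul g a) (fun g f => linf_norm_gsmul g f)
      (inclCLM (Cos G F)) hi
      ⟨1, zero_le_one, fun H hH =>
        ⟨projCLM (Cos G F) (⟨⟨H, hH⟩, ((1 : G) : G ⧸ H)⟩ : Cos G F),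
          projCLM_norm_le _ _, hequiv H hH, hsect H hH⟩⟩
      evalRCLM (fun g a => rfl)
    have h1 : Ψ (constLinf (Cos G F) 1) = 1 := hΨi (constLinf Pt.{u} 1)
    refine invariantMean_of_functional Ψ.toLinearMap ‖Ψ‖ (fun u C hC0 hC => ?_) h1 ?_
    · have h2 := Ψ.le_opNorm u
      rw [Real.norm_eq_abs] at h2
      have h3 : ‖u‖ ≤ C := norm_linf_le hC0 hC
      refine le_trans (le_abs_self _) (le_trans h2 ?_)
      exact mul_le_mul_of_nonneg_left h3 (norm_nonneg Ψ)
    · intro g f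
      exact hΨinv g f


end RelBdd
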